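/- For all integers K ≥ 1 and H ≥ 1, the Bellman–Pareto frontier equals the set of residual loss vectors of normalized states: 𝒱_{H,K} = { (V H s)·𝟏 − s | s : Fin K → ℝ with min_{k ∈ Fin K} s k = 0 }. -/

import Mathlib

open scoped BigOperators

noncomputable section

def simplex (K : ℕ) : Set (Fin K → ℝ) :=
  {q | (∀ k, 0 ≤ q k) ∧ ∑ k, q k = 1}

def simplexInt (K : ℕ) : Set (Fin K → ℝ) :=
  {r | (∀ k, 0 < r k) ∧ ∑ k, r k = 1}

noncomputable def V (K : ℕ) : ℕ → (Fin K → ℝ) → ℝ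
  | 0, s => ⨆ k, s k
  | H + 1, s =>
      sInf ((fun r : Fin K → ℝ =>
        sSup ((fun q : Fin K → ℝ => V K H (fun k => s k + q k / r k)) '' simplex K))
        '' simplexInt K)


variable {K : ℕ}


/-- A vector `v` is `(H'+1)`-achievable if there is a bookmaking strategy `Ψ`
(mapping each round `h` and each bet history to odds in the open simplex) such that
for every decisive bet sequence `q`, the total payout committed to the outcome of
the last bet equals the corresponding coordinate of `v`. -/
def Achievable (K H' : ℕ) (v : Fin K → ℝ) : Prop :=
  ∃ Ψ : (h : Fin (H' + 1)) → (Fin h.val → Fin K) → (Fin K → ℝ),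
    (∀ h hist, Ψ h hist ∈ simplexInt K) ∧
    ∀ q : Fin (H' + 1) → Fin K,
      (∑ h : Fin (H' + 1),
        if q h = q (Fin.last H')
        then 1 / Ψ h (fun i => q (Fin.castLE h.isLt.le i)) (q (Fin.last H'))
        else 0) = v (q (Fin.last H'))

namespace BPF
lemma V_zero (s : Fin K → ℝ) : V K 0 s = ⨆ k, s k := rfl

lemma V_succ (H : ℕ) (s : Fin K → ℝ) : V K (H+1) s =
    sInf ((fun r : Fin K → ℝ =>
        sSup ((fun q : Fin K → ℝ => V K H (fun k => s k + q k / r k)) '' simplex K))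
        '' simplexInt K) := rfl

lemma uniform_mem_simplexInt (hK : 0 < K) : (fun _ : Fin K => (K:ℝ)⁻¹) ∈ simplexInt K := by
  constructor
  · intro k; positivity
  · simp [Finset.sum_const, Finset.card_univ]
    field_simp

lemma uniform_mem_simplex (hK : 0 < K) : (fun _ : Fin K => (K:ℝ)⁻¹) ∈ simplex K := by
  obtain ⟨h1, h2⟩ := uniform_mem_simplexInt hK
  exact ⟨fun k => (h1 k).le, h2⟩

def vert (K : ℕ) (k : Fin K) : Fin K → ℝ := fun j => if k = j then 1 else 0

lemma vert_mem_simplex (k : Fin K) : vert K k ∈ simplex K := by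
  constructor
  · intro j; unfold vert; split <;> norm_num
  · simp [vert]

lemma simplexInt_le_one {r : Fin K → ℝ} (hr : r ∈ simplexInt K) (k : Fin K) : r k ≤ 1 := by
  rw [← hr.2]
  exact Finset.single_le_sum (fun i _ => (hr.1 i).le) (Finset.mem_univ k)

lemma simplex_le_one {q : Fin K → ℝ} (hq : q ∈ simplex K) (k : Fin K) : q k ≤ 1 := by
  rw [← hq.2]
  exact Finset.single_le_sum (fun i _ => hq.1 i) (Finset.mem_univ k)

lemma V_mono (hK : 0 < K) : ∀ H : ℕ, Monotone (V K H) := by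
  haveI : Nonempty (Fin K) := Fin.pos_iff_nonempty.mp hK
  intro H
  induction H with
  | zero =>
    intro s t hst
    exact ciSup_le fun k => (hst k).trans (le_ciSup (Finite.bddAbove_range t) k)
  | succ H IH =>
    intro s t hst
    rw [V_succ, V_succ]
    -- boundedness facts
    have bddA : ∀ (u : Fin K → ℝ) (r : Fin K → ℝ), r ∈ simplexInt K →
        BddAbove ((fun q : Fin K → ℝ => V K H (fun k => u k + q k / r k)) '' simplex K) := by
      intro u r hr
      refine ⟨V K H (fun k => u k + 1 / r k), ?_⟩
      rintro x ⟨q, hq, rfl⟩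
      refine IH fun k => ?_
      have : q k / r k ≤ 1 / r k := (div_le_div_iff_of_pos_right (hr.1 k)).mpr (simplex_le_one hq k)
      simpa using add_le_add_left this (u k)
    have neA : ∀ (u : Fin K → ℝ) (r : Fin K → ℝ),
        ((fun q : Fin K → ℝ => V K H (fun k => u k + q k / r k)) '' simplex K).Nonempty :=
      fun u r => ⟨_, Set.mem_image_of_mem _ (uniform_mem_simplex hK)⟩
    have bddB : BddBelow ((fun r : Fin K → ℝ =>
        sSup ((fun q : Fin K → ℝ => V K H (fun k => s k + q k / r k)) '' simplex K))
        '' simplexInt K) := by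
      refine ⟨V K H s, ?_⟩
      rintro x ⟨r, hr, rfl⟩
      refine le_trans ?_ (le_csSup (bddA s r hr) (Set.mem_image_of_mem _ (uniform_mem_simplex hK)))
      refine IH fun k => ?_
      have : 0 ≤ (K:ℝ)⁻¹ / r k := div_nonneg (by positivity) (hr.1 k).le
      linarith
    refine le_csInf (⟨_, Set.mem_image_of_mem _ (uniform_mem_simplexInt hK)⟩) ?_
    rintro x ⟨r, hr, rfl⟩
    refine le_trans (csInf_le bddB (Set.mem_image_of_mem _ hr)) ?_
    refine csSup_le (neA s r) ?_
    rintro x ⟨q, hq, rfl⟩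
    refine le_trans (IH fun k => add_le_add (hst k) le_rfl)
      (le_csSup (bddA t r hr) (Set.mem_image_of_mem _ hq))

-- standalone boundedness lemmas
lemma inner_bddAbove (hK : 0 < K) (H : ℕ) (s : Fin K → ℝ) {r : Fin K → ℝ} (hr : r ∈ simplexInt K) :
    BddAbove ((fun q : Fin K → ℝ => V K H (fun k => s k + q k / r k)) '' simplex K) := by
  refine ⟨V K H (fun k => s k + 1 / r k), ?_⟩
  rintro x ⟨q, hq, rfl⟩
  refine V_mono hK H fun k => ?_
  have : q k / r k ≤ 1 / r k := (div_le_div_iff_of_pos_right (hr.1 k)).mpr (simplex_le_one hq k)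
  simpa using add_le_add_left this (s k)

lemma inner_nonempty (hK : 0 < K) (H : ℕ) (s : Fin K → ℝ) (r : Fin K → ℝ) :
    ((fun q : Fin K → ℝ => V K H (fun k => s k + q k / r k)) '' simplex K).Nonempty :=
  ⟨_, Set.mem_image_of_mem _ (uniform_mem_simplex hK)⟩

/-- inner sup is at least `V K H s`. -/
lemma V_le_inner (hK : 0 < K) (H : ℕ) (s : Fin K → ℝ) {r : Fin K → ℝ} (hr : r ∈ simplexInt K) :
    V K H s ≤ sSup ((fun q : Fin K → ℝ => V K H (fun k => s k + q k / r k)) '' simplex K) := by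
  refine le_trans ?_ (le_csSup (inner_bddAbove hK H s hr) (Set.mem_image_of_mem _ (uniform_mem_simplex hK)))
  refine V_mono hK H fun k => ?_
  have : 0 ≤ (K:ℝ)⁻¹ / r k := div_nonneg (by positivity) (hr.1 k).le
  linarith

lemma outer_bddBelow (hK : 0 < K) (H : ℕ) (s : Fin K → ℝ) :
    BddBelow ((fun r : Fin K → ℝ =>
        sSup ((fun q : Fin K → ℝ => V K H (fun k => s k + q k / r k)) '' simplex K))
        '' simplexInt K) := by
  refine ⟨V K H s, ?_⟩
  rintro x ⟨r, hr, rfl⟩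
  exact V_le_inner hK H s hr

lemma outer_nonempty (hK : 0 < K) (H : ℕ) (s : Fin K → ℝ) :
    ((fun r : Fin K → ℝ =>
        sSup ((fun q : Fin K → ℝ => V K H (fun k => s k + q k / r k)) '' simplex K))
        '' simplexInt K).Nonempty :=
  ⟨_, Set.mem_image_of_mem _ (uniform_mem_simplexInt hK)⟩

lemma V_succ_le (hK : 0 < K) (H : ℕ) (s : Fin K → ℝ) {r : Fin K → ℝ} (hr : r ∈ simplexInt K) :
    V K (H+1) s ≤ sSup ((fun q : Fin K → ℝ => V K H (fun k => s k + q k / r k)) '' simplex K) := by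
  rw [V_succ]
  exact csInf_le (outer_bddBelow hK H s) (Set.mem_image_of_mem _ hr)

lemma le_V_succ (hK : 0 < K) (H : ℕ) (s : Fin K → ℝ) (c : ℝ)
    (h : ∀ r ∈ simplexInt K, c ≤ sSup ((fun q : Fin K → ℝ =>
      V K H (fun k => s k + q k / r k)) '' simplex K)) :
    c ≤ V K (H+1) s := by
  rw [V_succ]
  refine le_csInf (outer_nonempty hK H s) ?_
  rintro x ⟨r, hr, rfl⟩
  exact h r hr

lemma vertex_le_inner (hK : 0 < K) (H : ℕ) (s : Fin K → ℝ) {r : Fin K → ℝ}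
    (hr : r ∈ simplexInt K) (k : Fin K) :
    V K H (fun j => s j + if k = j then 1 / r j else 0) ≤
      sSup ((fun q : Fin K → ℝ => V K H (fun k => s k + q k / r k)) '' simplex K) := by
  refine le_csSup (inner_bddAbove hK H s hr) ⟨vert K k, vert_mem_simplex k, ?_⟩
  show V K H (fun j => s j + vert K k j / r j) = _
  congr 1
  funext j
  unfold vert
  split <;> simp

lemma sSup_add_const {A : Set ℝ} (hne : A.Nonempty) (hbdd : BddAbove A) (c : ℝ) :
    sSup ((fun x => x + c) '' A) = sSup A + c := by
  apply le_antisymm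
  · refine csSup_le (hne.image _) ?_
    rintro x ⟨y, hy, rfl⟩
    exact add_le_add (le_csSup hbdd hy) le_rfl
  · have hbdd' : BddAbove ((fun x => x + c) '' A) := by
      obtain ⟨b, hb⟩ := hbdd
      exact ⟨b + c, by rintro x ⟨y, hy, rfl⟩; exact add_le_add (hb hy) le_rfl⟩
    have : sSup A ≤ sSup ((fun x => x + c) '' A) - c := by
      refine csSup_le hne fun x hx => ?_
      have := le_csSup hbdd' (Set.mem_image_of_mem _ hx)
      linarith
    linarith

lemma sInf_add_const {A : Set ℝ} (hne : A.Nonempty) (hbdd : BddBelow A) (c : ℝ) :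
    sInf ((fun x => x + c) '' A) = sInf A + c := by
  apply le_antisymm
  · have : sInf ((fun x => x + c) '' A) - c ≤ sInf A := by
      refine le_csInf hne fun x hx => ?_
      have hbdd' : BddBelow ((fun x => x + c) '' A) := by
        obtain ⟨b, hb⟩ := hbdd
        exact ⟨b + c, by rintro y ⟨z, hz, rfl⟩; exact add_le_add (hb hz) le_rfl⟩
      have := csInf_le hbdd' (Set.mem_image_of_mem _ hx)
      linarith
    linarith
  · refine le_csInf (hne.image _) ?_
    rintro x ⟨y, hy, rfl⟩
    exact add_le_add (csInf_le hbdd hy) le_rfl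

lemma V_translate (hK : 0 < K) : ∀ (H : ℕ) (s : Fin K → ℝ) (c : ℝ),
    V K H (fun k => s k + c) = V K H s + c := by
  haveI : Nonempty (Fin K) := Fin.pos_iff_nonempty.mp hK
  intro H
  induction H with
  | zero =>
    intro s c
    rw [V_zero, V_zero]
    apply le_antisymm
    · exact ciSup_le fun k => add_le_add (le_ciSup (Finite.bddAbove_range s) k) le_rfl
    · have : ⨆ k, s k ≤ (⨆ k, s k + c) - c := by
        refine ciSup_le fun k => ?_
        have := le_ciSup (Finite.bddAbove_range (fun k => s k + c)) k
        linarith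
      linarith
  | succ H IH =>
    intro s c
    rw [V_succ, V_succ]
    have hinner : ∀ r : Fin K → ℝ,
        ((fun q : Fin K → ℝ => V K H (fun k => (s k + c) + q k / r k)) '' simplex K)
        = (fun x => x + c) '' ((fun q : Fin K → ℝ => V K H (fun k => s k + q k / r k)) '' simplex K) := by
      intro r
      rw [← Set.image_comp]
      apply Set.image_congr
      intro q _
      simp only [Function.comp]
      rw [← IH]
      congr 1
      funext k
      ring
    have houter : (fun r : Fin K → ℝ =>
        sSup ((fun q : Fin K → ℝ => V K H (fun k => (s k + c) + q k / r k)) '' simplex K)) '' simplexInt K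
        = (fun x => x + c) '' ((fun r : Fin K → ℝ =>
        sSup ((fun q : Fin K → ℝ => V K H (fun k => s k + q k / r k)) '' simplex K)) '' simplexInt K) := by
      rw [← Set.image_comp]
      apply Set.image_congr
      intro r hr
      simp only [Function.comp]
      rw [hinner r, sSup_add_const (inner_nonempty hK H s r) (inner_bddAbove hK H s hr)]
    rw [houter, sInf_add_const (outer_nonempty hK H s) (outer_bddBelow hK H s)]

lemma V_le_V_succ (hK : 0 < K) (H : ℕ) (s : Fin K → ℝ) :
    V K H s + 1/K ≤ V K (H+1) s := by
  haveI : Nonempty (Fin K) := Fin.pos_iff_nonempty.mp hK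
  refine le_V_succ hK H s _ fun r hr => ?_
  refine le_trans ?_ (le_csSup (inner_bddAbove hK H s hr) (Set.mem_image_of_mem _ (uniform_mem_simplex hK)))
  have : V K H (fun k => s k + 1/K) ≤ V K H (fun k => s k + (K:ℝ)⁻¹ / r k) := by
    refine V_mono hK H fun k => ?_
    have h1 : (K:ℝ)⁻¹ / r k ≥ (K:ℝ)⁻¹ / 1 := by
      apply div_le_div_of_nonneg_left (by positivity) (hr.1 k) (simplexInt_le_one hr k)
    simp only [div_one] at h1
    have : (1:ℝ)/K = (K:ℝ)⁻¹ := one_div _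
    linarith
  rw [V_translate hK H s (1/K)] at this
  exact this

lemma sup_le_V (hK : 0 < K) (H : ℕ) (s : Fin K → ℝ) (k : Fin K) : s k ≤ V K H s := by
  haveI : Nonempty (Fin K) := Fin.pos_iff_nonempty.mp hK
  induction H with
  | zero => exact le_ciSup (Finite.bddAbove_range s) k
  | succ H IH =>
    have := V_le_V_succ hK H s
    have h1K : (0:ℝ) < 1/K := by positivity
    linarith

lemma two_le_div_add_div {x y : ℝ} (hx : 0 < x) (hy : 0 < y) : 2 ≤ x/y + y/x := by
  rw [div_add_div _ _ (ne_of_gt hy) (ne_of_gt hx), le_div_iff₀ (by positivity)]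
  nlinarith [sq_nonneg (x - y)]

lemma harmonic_le {a b x y : ℝ} (ha : 0 ≤ a) (hb : 0 ≤ b) (hab : a + b = 1)
    (hx : 0 < x) (hy : 0 < y) : (a / x + b / y)⁻¹ ≤ a * x + b * y := by
  have hu : 0 < a / x + b / y := by
    rcases lt_or_ge 0 a with h | h
    · have : 0 < a / x := by positivity
      have : 0 ≤ b / y := by positivity
      linarith
    · have hb1 : b = 1 := by linarith [le_antisymm h ha]
      have : 0 < b / y := by rw [hb1]; positivity
      have : 0 ≤ a / x := by positivity
      linarith
  rw [inv_le_iff_one_le_mul₀ hu]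
  have key : (a / x + b / y) * (a * x + b * y) = a^2 + b^2 + a*b*(x/y + y/x) := by
    field_simp
    ring
  have h2 := two_le_div_add_div hx hy
  nlinarith [mul_nonneg ha hb, sq_nonneg (a - b)]

lemma V_convex (hK : 0 < K) : ∀ (H : ℕ) (s t : Fin K → ℝ) (a b : ℝ),
    0 ≤ a → 0 ≤ b → a + b = 1 →
    V K H (fun k => a * s k + b * t k) ≤ a * V K H s + b * V K H t := by
  haveI : Nonempty (Fin K) := Fin.pos_iff_nonempty.mp hK
  intro H
  induction H with
  | zero =>
    intro s t a b ha hb hab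
    rw [V_zero, V_zero, V_zero]
    refine ciSup_le fun k => ?_
    have h1 := le_ciSup (Finite.bddAbove_range s) k
    have h2 := le_ciSup (Finite.bddAbove_range t) k
    nlinarith
  | succ H IH =>
    intro s t a b ha hb hab
    refine le_of_forall_pos_le_add fun ε hε => ?_
    -- pick near-optimal odds for s and t
    obtain ⟨xs, ⟨rs, hrs, rfl⟩, hxs⟩ := exists_lt_of_csInf_lt (outer_nonempty hK H s)
      (show V K (H+1) s < V K (H+1) s + ε by linarith)
    obtain ⟨xt, ⟨rt, hrt, rfl⟩, hxt⟩ := exists_lt_of_csInf_lt (outer_nonempty hK H t)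
      (show V K (H+1) t < V K (H+1) t + ε by linarith)
    simp only at hxs hxt
    -- combined odds
    set u : Fin K → ℝ := fun k => a / rs k + b / rt k with hu
    have hupos : ∀ k, 0 < u k := by
      intro k
      rcases lt_or_ge 0 a with h | h
      · have h1 : 0 < a / rs k := div_pos h (hrs.1 k)
        have h2 : 0 ≤ b / rt k := div_nonneg hb (hrt.1 k).le
        simp only [hu]; linarith
      · have hb1 : b = 1 := by linarith [le_antisymm h ha]
        have h1 : 0 < b / rt k := by rw [hb1]; exact div_pos one_pos (hrt.1 k)
        have h2 : 0 ≤ a / rs k := div_nonneg ha (hrs.1 k).le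
        simp only [hu]; linarith
    have hsum : ∑ k, (u k)⁻¹ ≤ 1 := by
      calc ∑ k, (u k)⁻¹ ≤ ∑ k, (a * rs k + b * rt k) := by
            refine Finset.sum_le_sum fun k _ => ?_
            exact harmonic_le ha hb hab (hrs.1 k) (hrt.1 k)
        _ = a * (∑ k, rs k) + b * (∑ k, rt k) := by
            rw [Finset.mul_sum, Finset.mul_sum, ← Finset.sum_add_distrib]
        _ = 1 := by rw [hrs.2, hrt.2]; linarith
    set ρ : ℝ := ∑ k, (u k)⁻¹ with hρ
    set r : Fin K → ℝ := fun k => (u k)⁻¹ + (1 - ρ)/K with hrdef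
    have hr : r ∈ simplexInt K := by
      constructor
      · intro k
        have h1 : 0 < (u k)⁻¹ := inv_pos.mpr (hupos k)
        have h2 : 0 ≤ (1 - ρ)/K := by
          apply div_nonneg _ (by positivity)
          linarith
        simp only [hrdef]; linarith
      · simp only [hrdef]
        rw [Finset.sum_add_distrib, ← hρ, Finset.sum_const, Finset.card_univ, Fintype.card_fin,
          nsmul_eq_mul]
        field_simp
        ring
    have hrinv : ∀ k, 1 / r k ≤ u k := by
      intro k
      have h1 : (u k)⁻¹ ≤ r k := by
        have h2 : 0 ≤ (1 - ρ)/K := div_nonneg (by linarith) (by positivity)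
        simp only [hrdef]; linarith
      rw [div_le_iff₀ (hr.1 k)]
      have h2 : u k * (u k)⁻¹ ≤ u k * r k := mul_le_mul_of_nonneg_left h1 (hupos k).le
      have h3 : u k * (u k)⁻¹ = 1 := mul_inv_cancel₀ (ne_of_gt (hupos k))
      calc (1:ℝ) = u k * (u k)⁻¹ := h3.symm
        _ ≤ u k * r k := h2
    -- main estimate
    refine le_trans (V_succ_le hK H _ hr) ?_
    refine csSup_le (inner_nonempty hK H _ r) ?_
    rintro x ⟨q, hq, rfl⟩
    have step1 : V K H (fun k => (a * s k + b * t k) + q k / r k) ≤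
        V K H (fun k => a * (s k + q k / rs k) + b * (t k + q k / rt k)) := by
      refine V_mono hK H fun k => ?_
      have h1 : q k / r k ≤ q k * u k := by
        calc q k / r k = q k * (1 / r k) := by rw [mul_one_div]
          _ ≤ q k * u k := mul_le_mul_of_nonneg_left (hrinv k) (hq.1 k)
      have h2 : q k * u k = a * (q k / rs k) + b * (q k / rt k) := by
        simp only [hu]; ring
      nlinarith [h1, h2]
    have step2 : V K H (fun k => a * (s k + q k / rs k) + b * (t k + q k / rt k)) ≤
        a * V K H (fun k => s k + q k / rs k) + b * V K H (fun k => t k + q k / rt k) :=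
      IH _ _ a b ha hb hab
    have step3 : V K H (fun k => s k + q k / rs k) ≤
        sSup ((fun q : Fin K → ℝ => V K H (fun k => s k + q k / rs k)) '' simplex K) :=
      le_csSup (inner_bddAbove hK H s hrs) (Set.mem_image_of_mem _ hq)
    have step4 : V K H (fun k => t k + q k / rt k) ≤
        sSup ((fun q : Fin K → ℝ => V K H (fun k => t k + q k / rt k)) '' simplex K) :=
      le_csSup (inner_bddAbove hK H t hrt) (Set.mem_image_of_mem _ hq)
    have hs' : V K H (fun k => s k + q k / rs k) ≤ V K (H+1) s + ε := le_trans step3 hxs.le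
    have ht' : V K H (fun k => t k + q k / rt k) ≤ V K (H+1) t + ε := le_trans step4 hxt.le
    calc V K H (fun k => (a * s k + b * t k) + q k / r k)
        ≤ a * V K H (fun k => s k + q k / rs k) + b * V K H (fun k => t k + q k / rt k) :=
          le_trans step1 step2
      _ ≤ a * (V K (H+1) s + ε) + b * (V K (H+1) t + ε) := by
          exact add_le_add (mul_le_mul_of_nonneg_left hs' ha) (mul_le_mul_of_nonneg_left ht' hb)
      _ = a * V K (H+1) s + b * V K (H+1) t + ε := by nlinarith [hab]

lemma simplex_eq_stdSimplex : simplex K = stdSimplex ℝ (Fin K) := rfl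

lemma inner_le_vertex (hK : 0 < K) (H : ℕ) (s : Fin K → ℝ) {r : Fin K → ℝ}
    (hr : r ∈ simplexInt K) :
    sSup ((fun q : Fin K → ℝ => V K H (fun k => s k + q k / r k)) '' simplex K) ≤
      ⨆ k, V K H (fun j => s j + if k = j then 1 / r j else 0) := by
  haveI : Nonempty (Fin K) := Fin.pos_iff_nonempty.mp hK
  refine csSup_le (inner_nonempty hK H s r) ?_
  rintro x ⟨q, hq, rfl⟩
  have hg : ConvexOn ℝ Set.univ (fun q : Fin K → ℝ => V K H (fun k => s k + q k / r k)) := by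
    refine ⟨convex_univ, ?_⟩
    intro p _ p' _ a b ha hb hab
    simp only [smul_eq_mul]
    have harg : (fun k => s k + (a • p + b • p') k / r k) =
        (fun k => a * (s k + p k / r k) + b * (s k + p' k / r k)) := by
      funext k
      have hrk : r k ≠ 0 := (hr.1 k).ne'
      have e1 : a * (s k + p k / r k) + b * (s k + p' k / r k)
          = (a + b) * s k + (a * p k + b * p' k) / r k := by
        field_simp
        ring
      simp only [Pi.add_apply, Pi.smul_apply, smul_eq_mul]
      rw [e1, hab, one_mul]
    rw [harg]
    exact V_convex hK H _ _ a b ha hb hab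
  have hq' : q ∈ stdSimplex ℝ (Fin K) := hq
  rw [← convexHull_basis_eq_stdSimplex] at hq'
  obtain ⟨y, ⟨k, rfl⟩, hle⟩ := hg.exists_ge_of_mem_convexHull (Set.subset_univ _) hq'
  refine le_trans hle (le_trans (le_of_eq ?_)
    (le_ciSup (f := fun k => V K H fun j => s j + if k = j then 1 / r j else 0)
      (Finite.bddAbove_range _) k))
  congr 1
  funext j
  by_cases h : k = j <;> simp [h]

-- coordinate section function
lemma fco_mono (hK : 0 < K) (H : ℕ) (s : Fin K → ℝ) (k : Fin K) :
    Monotone (fun t => V K H (fun j => s j + if k = j then t else 0)) := by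
  intro x y hxy
  refine V_mono hK H fun j => ?_
  by_cases h : k = j <;> simp [h, hxy]

lemma fco_lipschitz (hK : 0 < K) (H : ℕ) (s : Fin K → ℝ) (k : Fin K) :
    ∀ x y : ℝ, V K H (fun j => s j + if k = j then x else 0) ≤
      V K H (fun j => s j + if k = j then y else 0) + |x - y| := by
  intro x y
  have h1 : V K H (fun j => s j + if k = j then x else 0) ≤
      V K H (fun j => (s j + if k = j then y else 0) + |x - y|) := by
    refine V_mono hK H fun j => ?_
    have := abs_nonneg (x - y)
    have := le_abs_self (x - y)
    by_cases h : k = j <;> simp [h] <;> linarith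
  rwa [V_translate hK H] at h1

lemma fco_continuous (hK : 0 < K) (H : ℕ) (s : Fin K → ℝ) (k : Fin K) :
    Continuous (fun t => V K H (fun j => s j + if k = j then t else 0)) := by
  refine (LipschitzWith.of_dist_le_mul (K := 1) fun x y => ?_).continuous
  rw [Real.dist_eq, Real.dist_eq, NNReal.coe_one, one_mul]
  have h1 := fco_lipschitz hK H s k x y
  have h2 := fco_lipschitz hK H s k y x
  rw [abs_sub_comm y x] at h2
  rw [abs_le]
  constructor <;> linarith

lemma fco_lower (hK : 0 < K) (H : ℕ) (s : Fin K → ℝ) (k : Fin K) (t : ℝ) :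
    s k + t ≤ V K H (fun j => s j + if k = j then t else 0) := by
  have := sup_le_V hK H (fun j => s j + if k = j then t else 0) k
  simpa using this

lemma crossing (hK : 0 < K) (H : ℕ) (s : Fin K → ℝ) (k : Fin K)
    (hneg : V K H s < 0) :
    ∃ tmin tmax : ℝ, 0 < tmin ∧ tmin ≤ tmax ∧
      V K H (fun j => s j + if k = j then tmin else 0) = 0 ∧
      V K H (fun j => s j + if k = j then tmax else 0) = 0 ∧
      (∀ t, 0 ≤ t → t < tmin → V K H (fun j => s j + if k = j then t else 0) < 0) ∧
      (∀ t, tmax < t → 0 < V K H (fun j => s j + if k = j then t else 0)) := by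
  set f : ℝ → ℝ := fun t => V K H (fun j => s j + if k = j then t else 0) with hf
  have hcont : Continuous f := fco_continuous hK H s k
  have hmono : Monotone f := fco_mono hK H s k
  have hf0 : f 0 < 0 := by
    have : (fun j => s j + if k = j then (0:ℝ) else 0) = s := by funext j; split <;> simp
    simp only [hf, this]
    exact hneg
  set M : ℝ := |s k| + 1 with hM
  have hfM : 0 < f M := by
    have := fco_lower hK H s k M
    have := neg_abs_le (s k)
    simp only [hf]
    linarith [abs_nonneg (s k)]
  have hM0 : (0:ℝ) ≤ M := by positivity
  -- zero set
  set Z : Set ℝ := {t | 0 ≤ t ∧ f t = 0} with hZ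
  have hZne : Z.Nonempty := by
    have h0 : (0:ℝ) ∈ Set.Icc (f 0) (f M) := ⟨hf0.le, hfM.le⟩
    obtain ⟨t0, ht0, hft0⟩ := intermediate_value_Icc hM0 hcont.continuousOn h0
    exact ⟨t0, ht0.1, hft0⟩
  have hZclosed : IsClosed Z := by
    have : Z = Set.Ici 0 ∩ f ⁻¹' {0} := by
      ext t; simp [hZ, Set.mem_Ici]
    rw [this]
    exact isClosed_Ici.inter (isClosed_singleton.preimage hcont)
  have hZbddAbove : BddAbove Z := by
    refine ⟨-s k, ?_⟩
    rintro t ⟨ht0, htf⟩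
    have := fco_lower hK H s k t
    simp only [hf] at htf
    linarith [htf ▸ this]
  have hZbddBelow : BddBelow Z := ⟨0, fun t ht => ht.1⟩
  refine ⟨sInf Z, sSup Z, ?_, csInf_le_csSup hZne hZbddBelow hZbddAbove, ?_, ?_, ?_, ?_⟩
  · have hmem := hZclosed.csInf_mem hZne hZbddBelow
    rcases lt_or_eq_of_le hmem.1 with h | h
    · exact h
    · exfalso
      have := hmem.2
      rw [← h] at this
      exact absurd this (ne_of_lt hf0)
  · exact (hZclosed.csInf_mem hZne hZbddBelow).2
  · exact (hZclosed.csSup_mem hZne hZbddAbove).2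
  · intro t ht0 htlt
    have hle : f t ≤ f (sInf Z) := hmono htlt.le
    have hz := (hZclosed.csInf_mem hZne hZbddBelow).2
    rcases lt_or_eq_of_le (hle.trans_eq hz) with h | h
    · exact h
    · exfalso
      have : t ∈ Z := ⟨ht0, h⟩
      exact absurd (csInf_le hZbddBelow this) (not_le.mpr htlt)
  · intro t htgt
    have hge : f (sSup Z) ≤ f t := hmono htgt.le
    have hz := (hZclosed.csSup_mem hZne hZbddAbove).2
    rcases lt_or_eq_of_le (hz ▸ hge) with h | h
    · exact h
    · exfalso
      have ht0 : 0 ≤ t := le_trans (hZclosed.csSup_mem hZne hZbddAbove).1 htgt.le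
      have : t ∈ Z := ⟨ht0, h.symm⟩
      exact absurd (le_csSup hZbddAbove this) (not_le.mpr htgt)

lemma if_coord (s c : Fin K → ℝ) (k : Fin K) :
    (fun j => s j + if k = j then c j else 0) = (fun j => s j + if k = j then c k else 0) := by
  funext j
  by_cases h : k = j
  · subst h; rfl
  · simp [h]

lemma V_succ_eq_zero_of_equalizer (hK : 0 < K) (H : ℕ) (s : Fin K → ℝ) {r : Fin K → ℝ}
    (hr : r ∈ simplexInt K)
    (hz : ∀ k, V K H (fun j => s j + if k = j then 1 / r j else 0) = 0) :
    V K (H+1) s = 0 := by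
  haveI : Nonempty (Fin K) := Fin.pos_iff_nonempty.mp hK
  apply le_antisymm
  · refine le_trans (V_succ_le hK H s hr) ?_
    refine le_trans (inner_le_vertex hK H s hr) ?_
    exact ciSup_le fun k => le_of_eq (hz k)
  · refine le_V_succ hK H s 0 fun r' hr' => ?_
    -- find a coordinate where r' k ≤ r k
    have hex : ∃ k, r' k ≤ r k := by
      by_contra hcon
      push_neg at hcon
      have : (1:ℝ) < 1 := by
        calc (1:ℝ) = ∑ k, r k := hr.2.symm
          _ < ∑ k, r' k := Finset.sum_lt_sum_of_nonempty Finset.univ_nonempty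
              (fun k _ => hcon k)
          _ = 1 := hr'.2
      exact absurd this (lt_irrefl 1)
    obtain ⟨k, hk⟩ := hex
    have h1 : 1 / r k ≤ 1 / r' k := one_div_le_one_div_of_le (hr'.1 k) hk
    have h2 : V K H (fun j => s j + if k = j then 1 / r j else 0) ≤
        V K H (fun j => s j + if k = j then 1 / r' j else 0) := by
      refine V_mono hK H fun j => ?_
      by_cases h : k = j
      · subst h
        have h1' : (r k)⁻¹ ≤ (r' k)⁻¹ := by rw [← one_div, ← one_div]; exact h1
        simp [h1']
      · simp [h]
    calc (0:ℝ) = V K H (fun j => s j + if k = j then 1 / r j else 0) := (hz k).symm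
      _ ≤ V K H (fun j => s j + if k = j then 1 / r' j else 0) := h2
      _ ≤ _ := vertex_le_inner hK H s hr' k

lemma exists_equalizer (hK : 0 < K) (H : ℕ) (s : Fin K → ℝ)
    (hV : V K (H+1) s = 0) :
    ∃ r ∈ simplexInt K, ∀ k, V K H (fun j => s j + if k = j then 1 / r j else 0) = 0 := by
  haveI : Nonempty (Fin K) := Fin.pos_iff_nonempty.mp hK
  have hKR : (0:ℝ) < K := by exact_mod_cast hK
  have hneg : V K H s < 0 := by
    have := V_le_V_succ hK H s
    have h1K : (0:ℝ) < 1/K := by positivity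
    linarith [hV ▸ this]
  choose tmin tmax htminpos htminmax hfmin hfmax hbelow habove using
    fun k => crossing hK H s k hneg
  have htmaxpos : ∀ k, 0 < tmax k := fun k => lt_of_lt_of_le (htminpos k) (htminmax k)
  -- S1 : ∑ 1/tmax ≤ 1
  have hS1 : ∑ k, 1 / tmax k ≤ 1 := by
    by_contra hcon
    push_neg at hcon
    set a : ℝ := ∑ k, 1 / tmax k with ha
    set θ : ℝ := (1 + a)/2 with hθ
    have hθ1 : 1 < θ := by simp only [hθ]; linarith
    have hθa : θ < a := by simp only [hθ]; linarith
    have hδpos : ∀ k, 0 < V K H (fun j => s j + if k = j then θ * tmax k else 0) := by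
      intro k
      refine habove k _ ?_
      nlinarith [htmaxpos k]
    obtain ⟨k₀, hk₀⟩ := Finite.exists_min
      (fun k => V K H (fun j => s j + if k = j then θ * tmax k else 0))
    have h0δ : V K (H+1) s < V K H (fun j => s j + if k₀ = j then θ * tmax k₀ else 0) := by
      rw [hV]; exact hδpos k₀
    rw [V_succ] at h0δ
    obtain ⟨x, ⟨r, hr, rfl⟩, hx⟩ := exists_lt_of_csInf_lt
      (outer_nonempty hK H s) h0δ
    simp only at hx
    have hrlt : ∀ k, 1 / r k < θ * tmax k := by
      intro k
      by_contra hge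
      push_neg at hge
      have h1 : V K H (fun j => s j + if k = j then θ * tmax k else 0) ≤
          V K H (fun j => s j + if k = j then 1 / r j else 0) := by
        refine V_mono hK H fun j => ?_
        by_cases h : k = j
        · subst h
          have hge' : θ * tmax k ≤ (r k)⁻¹ := by rw [← one_div]; exact hge
          simp [hge']
        · simp [h]
      have h2 := vertex_le_inner hK H s hr k
      have h3 := hk₀ k
      linarith
    have hrgt : ∀ k, 1 / (θ * tmax k) < r k := by
      intro k
      have h1 : 0 < θ * tmax k := mul_pos (lt_trans one_pos hθ1) (htmaxpos k)
      have h2 : 0 < r k := hr.1 k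
      rw [div_lt_iff₀ h1]
      have := hrlt k
      rw [div_lt_iff₀ h2] at this
      linarith
    have : (1:ℝ) < 1 := by
      calc (1:ℝ) = θ⁻¹ * θ := by field_simp
        _ < θ⁻¹ * a := by
            apply mul_lt_mul_of_pos_left hθa
            exact inv_pos.mpr (lt_trans one_pos hθ1)
        _ = ∑ k, 1 / (θ * tmax k) := by
            rw [ha, Finset.mul_sum]
            congr 1
            funext k
            rw [one_div, one_div, mul_inv]
        _ < ∑ k, r k := Finset.sum_lt_sum_of_nonempty Finset.univ_nonempty
            (fun k _ => hrgt k)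
        _ = 1 := hr.2
    exact absurd this (lt_irrefl 1)
  -- S2 : 1 ≤ ∑ 1/tmin
  have hS2 : 1 ≤ ∑ k, 1 / tmin k := by
    by_contra hcon
    push_neg at hcon
    set b : ℝ := ∑ k, 1 / tmin k with hb
    set r : Fin K → ℝ := fun k => 1 / tmin k + (1 - b)/K with hrdef
    have hr : r ∈ simplexInt K := by
      constructor
      · intro k
        have h1 : 0 < 1 / tmin k := one_div_pos.mpr (htminpos k)
        have h2 : 0 < (1 - b)/K := by
          apply div_pos _ hKR
          linarith
        simp only [hrdef]; linarith
      · simp only [hrdef]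
        rw [Finset.sum_add_distrib, ← hb, Finset.sum_const, Finset.card_univ, Fintype.card_fin,
          nsmul_eq_mul]
        field_simp
        ring
    have hrless : ∀ k, 1 / r k < tmin k := by
      intro k
      have h1 : 1 / tmin k < r k := by
        have h2 : 0 < (1 - b)/K := div_pos (by linarith) hKR
        simp only [hrdef]; linarith
      have h3 : 0 < r k := hr.1 k
      rw [div_lt_iff₀ h3]
      rw [div_lt_iff₀ (htminpos k)] at h1
      linarith
    have hvert : ∀ k, V K H (fun j => s j + if k = j then 1 / r j else 0) < 0 := by
      intro k
      rw [if_coord s (fun j => 1 / r j) k]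
      refine hbelow k _ ?_ (hrless k)
      exact (one_div_pos.mpr (hr.1 k)).le
    obtain ⟨k₁, hk₁⟩ := Finite.exists_max
      (fun k => V K H (fun j => s j + if k = j then 1 / r j else 0))
    have : V K (H+1) s < 0 := by
      refine lt_of_le_of_lt (V_succ_le hK H s hr) ?_
      refine lt_of_le_of_lt (inner_le_vertex hK H s hr) ?_
      exact lt_of_le_of_lt (ciSup_le fun k => hk₁ k) (hvert k₁)
    rw [hV] at this
    exact absurd this (lt_irrefl 0)
  -- construct r interpolating between 1/tmax and 1/tmin
  set a : ℝ := ∑ k, 1 / tmax k with ha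
  set b : ℝ := ∑ k, 1 / tmin k with hb
  have hinvle : ∀ k, 1 / tmax k ≤ 1 / tmin k :=
    fun k => one_div_le_one_div_of_le (htminpos k) (htminmax k)
  have hab : a ≤ b := Finset.sum_le_sum fun k _ => hinvle k
  rcases eq_or_lt_of_le hab with heq | hlt
  · -- a = b, so a = 1
    have ha1 : a = 1 := le_antisymm hS1 (by rw [heq]; exact hS2)
    refine ⟨fun k => 1 / tmax k, ⟨fun k => one_div_pos.mpr (htmaxpos k), by rw [← ha]; exact ha1⟩, ?_⟩
    intro k
    have harg : (fun j => s j + if k = j then 1 / (1 / tmax j) else 0)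
        = (fun j => s j + if k = j then tmax j else 0) := by
      funext j
      by_cases h : k = j
      · subst h; rw [if_pos rfl, if_pos rfl, one_div_one_div]
      · simp [h]
    rw [harg, if_coord s tmax k]
    exact hfmax k
  · -- a < b
    set θ : ℝ := (1 - a)/(b - a) with hθ
    have hθ0 : 0 ≤ θ := div_nonneg (by linarith) (by linarith)
    have hθ1 : θ ≤ 1 := by
      rw [hθ, div_le_one (by linarith)]
      linarith
    set r : Fin K → ℝ := fun k => (1 - θ) / tmax k + θ / tmin k with hrdef
    have hrpos : ∀ k, 0 < r k := by
      intro k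
      rcases lt_or_eq_of_le hθ0 with h | h
      · have h1 : 0 < θ / tmin k := div_pos h (htminpos k)
        have h2 : 0 ≤ (1 - θ) / tmax k := div_nonneg (by linarith) (htmaxpos k).le
        simp only [hrdef]; linarith
      · have h1 : 0 < (1 - θ) / tmax k := div_pos (by linarith [h]) (htmaxpos k)
        have h2 : 0 ≤ θ / tmin k := div_nonneg hθ0 (htminpos k).le
        simp only [hrdef]; linarith
    have hrsum : ∑ k, r k = 1 := by
      simp only [hrdef]
      rw [Finset.sum_add_distrib]
      have e1 : ∑ k, (1 - θ) / tmax k = (1 - θ) * a := by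
        rw [ha, Finset.mul_sum]
        congr 1; funext k; rw [div_eq_mul_one_div]
      have e2 : ∑ k, θ / tmin k = θ * b := by
        rw [hb, Finset.mul_sum]
        congr 1; funext k; rw [div_eq_mul_one_div]
      rw [e1, e2, hθ]
      have hba : b - a ≠ 0 := ne_of_gt (by linarith)
      field_simp
      ring
    refine ⟨r, ⟨hrpos, hrsum⟩, ?_⟩
    intro k
    -- bracketing : 1/tmax k ≤ r k ≤ 1/tmin k
    have hlow : 1 / tmax k ≤ r k := by
      have h1 : (1 - θ) / tmax k + θ / tmax k = 1 / tmax k := by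
        rw [← add_div]; ring_nf
      have h2 : θ / tmax k ≤ θ / tmin k := by
        rcases eq_or_lt_of_le hθ0 with h | h
        · rw [← h]; simp
        · exact div_le_div_of_nonneg_left hθ0 (htminpos k) (htminmax k)
      simp only [hrdef]; linarith
    have hhigh : r k ≤ 1 / tmin k := by
      have h1 : (1 - θ) / tmin k + θ / tmin k = 1 / tmin k := by
        rw [← add_div]; ring_nf
      have h2 : (1 - θ) / tmax k ≤ (1 - θ) / tmin k := by
        rcases eq_or_lt_of_le hθ1 with h | h
        · rw [h]; simp
        · exact div_le_div_of_nonneg_left (by linarith) (htminpos k) (htminmax k)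
      simp only [hrdef]; linarith
    have hbr1 : tmin k ≤ 1 / r k := by
      have := one_div_le_one_div_of_le (hrpos k) hhigh
      rwa [one_div_one_div] at this
    have hbr2 : 1 / r k ≤ tmax k := by
      have h0 : 0 < 1 / tmax k := one_div_pos.mpr (htmaxpos k)
      have := one_div_le_one_div_of_le h0 hlow
      rwa [one_div_one_div] at this
    -- squeeze
    have e3 : (fun j => s j + if k = j then 1 / r j else 0)
        = (fun j => s j + if k = j then 1 / r k else 0) := by
      funext j
      by_cases h : k = j
      · subst h; rfl
      · simp [h]
    rw [e3]
    apply le_antisymm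
    · calc V K H (fun j => s j + if k = j then 1 / r k else 0)
          ≤ V K H (fun j => s j + if k = j then tmax k else 0) := fco_mono hK H s k hbr2
        _ = 0 := hfmax k
    · calc (0:ℝ) = V K H (fun j => s j + if k = j then tmin k else 0) := (hfmin k).symm
        _ ≤ V K H (fun j => s j + if k = j then 1 / r k else 0) := fco_mono hK H s k hbr1

/-- recursive form of achievability -/
def Ach (K : ℕ) : ℕ → (Fin K → ℝ) → Prop
  | 0, v => ∃ r ∈ simplexInt K, v = fun k => 1 / r k
  | H+1, v => ∃ r ∈ simplexInt K, ∀ k : Fin K,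
      Ach K H (fun j => v j - if k = j then 1 / r j else 0)


theorem Ach_iff_V (hK : 0 < K) : ∀ (H : ℕ) (v : Fin K → ℝ),
    Ach K H v ↔ V K (H+1) (fun k => -v k) = 0 := by
  haveI : Nonempty (Fin K) := Fin.pos_iff_nonempty.mp hK
  intro H
  induction H with
  | zero =>
    intro v
    constructor
    · rintro ⟨r, hr, rfl⟩
      refine V_succ_eq_zero_of_equalizer hK 0 _ hr fun k => ?_
      rw [V_zero]
      apply le_antisymm
      · refine ciSup_le fun j => ?_
        by_cases h : k = j
        · subst h; simp
        · simp [h]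
          exact (hr.1 j).le
      · have := le_ciSup (f := fun j => -(1 / r j) + if k = j then 1 / r j else 0)
          (Finite.bddAbove_range _) k
        simpa using this
    · intro hV
      obtain ⟨r, hr, hz⟩ := exists_equalizer hK 0 _ hV
      have hvpos : ∀ j, 0 < v j := by
        intro j
        have h1 := V_le_V_succ hK 0 (fun k => -v k)
        rw [hV] at h1
        have h2 : -v j ≤ V K 0 (fun k => -v k) := by
          simpa using sup_le_V hK 0 (fun k => -v k) j
        have h3 : (0:ℝ) < 1/K := by positivity
        linarith
      refine ⟨r, hr, funext fun k => ?_⟩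
      have hzk := hz k
      rw [if_coord (fun j => -v j) (fun j => 1 / r j) k] at hzk
      set t : ℝ := 1 / r k with ht
      have htpos : 0 < t := one_div_pos.mpr (hr.1 k)
      rcases lt_trichotomy (v k) t with h | h | h
      · exfalso
        have : 0 < V K 0 (fun j => -v j + if k = j then t else 0) := by
          rw [V_zero]
          refine lt_of_lt_of_le ?_ (le_ciSup (f := fun j => -v j + if k = j then t else 0)
            (Finite.bddAbove_range _) k)
          simp
          linarith
        rw [hzk] at this
        exact absurd this (lt_irrefl 0)
      · exact h
      · exfalso
        have : V K 0 (fun j => -v j + if k = j then t else 0) < 0 := by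
          rw [V_zero]
          obtain ⟨j₂, hj₂⟩ := Finite.exists_max (fun j => -v j + if k = j then t else 0)
          refine lt_of_le_of_lt (ciSup_le fun j => hj₂ j) ?_
          by_cases hc : k = j₂
          · subst hc; simp; linarith
          · have := hvpos j₂
            simp [hc]
            linarith
        rw [hzk] at this
        exact absurd this (lt_irrefl 0)
  | succ H IH =>
    intro v
    constructor
    · rintro ⟨r, hr, hA⟩
      refine V_succ_eq_zero_of_equalizer hK (H+1) _ hr fun k => ?_
      have h1 := (IH _).mp (hA k)
      have harg : (fun j => -(v j - if k = j then 1 / r j else 0))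
          = (fun j => -v j + if k = j then 1 / r j else 0) := by
        funext j; ring
      rw [harg] at h1
      exact h1
    · intro hV
      obtain ⟨r, hr, hz⟩ := exists_equalizer hK (H+1) _ hV
      refine ⟨r, hr, fun k => ?_⟩
      refine (IH _).mpr ?_
      have harg : (fun j => -(v j - if k = j then 1 / r j else 0))
          = (fun j => -v j + if k = j then 1 / r j else 0) := by
        funext j; ring
      rw [harg]
      exact hz k

/-- peel off the first round of a strategy after the first bet `k`. -/
def peel {H' : ℕ} (Ψ : (h : Fin (H' + 2)) → (Fin h.val → Fin K) → (Fin K → ℝ))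
    (k : Fin K) : (h : Fin (H' + 1)) → (Fin h.val → Fin K) → (Fin K → ℝ) :=
  fun h hist => Ψ h.succ (Fin.cons k hist)

lemma castLE_zero' (H' : ℕ) (h : Fin (H' + 2)) (hpos : 0 < h.val) :
    Fin.castLE h.isLt.le (⟨0, hpos⟩ : Fin h.val) = (0 : Fin (H' + 2)) := by
  ext
  simp

lemma sum_decomp {H' : ℕ} (Ψ : (h : Fin (H' + 2)) → (Fin h.val → Fin K) → (Fin K → ℝ))
    (q : Fin (H' + 2) → Fin K) :
    (∑ h : Fin (H' + 2),
        if q h = q (Fin.last (H'+1))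
        then 1 / Ψ h (fun i => q (Fin.castLE h.isLt.le i)) (q (Fin.last (H'+1)))
        else 0)
    = (if q 0 = q (Fin.last (H'+1))
        then 1 / Ψ 0 (fun i => q (Fin.castLE (0 : Fin (H'+2)).isLt.le i)) (q (Fin.last (H'+1)))
        else 0)
      + ∑ h : Fin (H' + 1),
        if Fin.tail q h = Fin.tail q (Fin.last H')
        then 1 / peel Ψ (q 0) h (fun i => Fin.tail q (Fin.castLE h.isLt.le i))
          (Fin.tail q (Fin.last H'))
        else 0 := by
  rw [Fin.sum_univ_succ]
  congr 1
  refine Finset.sum_congr rfl fun h _ => ?_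
  have e1 : Fin.tail q (Fin.last H') = q (Fin.last (H'+1)) := by
    show q (Fin.last H').succ = q (Fin.last (H'+1))
    rw [Fin.succ_last]
  have e2 : Fin.tail q h = q h.succ := rfl
  have harg : (Fin.cons (q 0) (fun i => Fin.tail q (Fin.castLE h.isLt.le i)) :
        Fin (h.succ.val) → Fin K)
      = fun i => q (Fin.castLE h.succ.isLt.le i) := by
    funext i
    refine Fin.cases ?_ (fun j => ?_) i
    · rw [Fin.cons_zero]
      congr 1
    · rw [Fin.cons_succ]
      show q (Fin.castLE h.isLt.le j).succ = q (Fin.castLE h.succ.isLt.le j.succ)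
      congr 1
  have e3 : peel Ψ (q 0) h (fun i => Fin.tail q (Fin.castLE h.isLt.le i))
      = Ψ h.succ (fun i => q (Fin.castLE h.succ.isLt.le i)) := by
    show Ψ h.succ (Fin.cons (q 0) (fun i => Fin.tail q (Fin.castLE h.isLt.le i)))
      = Ψ h.succ (fun i => q (Fin.castLE h.succ.isLt.le i))
    rw [harg]
  rw [e1, e2, e3]

lemma achievable_zero_iff (v : Fin K → ℝ) : Achievable K 0 v ↔ Ach K 0 v := by
  constructor
  · rintro ⟨Ψ, hmem, hsum⟩
    refine ⟨Ψ 0 Fin.elim0, hmem 0 Fin.elim0, funext fun k => ?_⟩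
    have h := hsum (fun _ => k)
    rw [Fin.sum_univ_one] at h
    simp only [eq_self_iff_true, if_true] at h
    rw [← h]
    congr 1
    congr 1
    funext i
    exact i.elim0
  · rintro ⟨r, hr, rfl⟩
    refine ⟨fun _ _ => r, fun _ _ => hr, fun q => ?_⟩
    rw [Fin.sum_univ_one]
    have h0 : q 0 = q (Fin.last 0) := rfl
    rw [if_pos h0]

/-- glue a first-round odds vector with continuation strategies. -/
def glue {H' : ℕ} (r : Fin K → ℝ)
    (Ψ' : Fin K → (h : Fin (H' + 1)) → (Fin h.val → Fin K) → (Fin K → ℝ)) :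
    (h : Fin (H' + 2)) → (Fin h.val → Fin K) → (Fin K → ℝ) :=
  fun h => Fin.cases (motive := fun h : Fin (H'+2) => (Fin h.val → Fin K) → (Fin K → ℝ))
    (fun _ => r)
    (fun h' (hist : Fin (h'.val + 1) → Fin K) => Ψ' (hist 0) h' (fun i => hist i.succ)) h

lemma glue_zero {H' : ℕ} (r : Fin K → ℝ)
    (Ψ' : Fin K → (h : Fin (H' + 1)) → (Fin h.val → Fin K) → (Fin K → ℝ))
    (hist : Fin ((0 : Fin (H'+2)).val) → Fin K) : glue r Ψ' 0 hist = r := by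
  rfl

lemma glue_succ {H' : ℕ} (r : Fin K → ℝ)
    (Ψ' : Fin K → (h : Fin (H' + 1)) → (Fin h.val → Fin K) → (Fin K → ℝ))
    (h : Fin (H'+1)) (hist : Fin (h.val + 1) → Fin K) :
    glue r Ψ' h.succ hist = Ψ' (hist 0) h (fun i => hist i.succ) := by
  rfl

lemma peel_glue {H' : ℕ} (r : Fin K → ℝ)
    (Ψ' : Fin K → (h : Fin (H' + 1)) → (Fin h.val → Fin K) → (Fin K → ℝ)) (k : Fin K) :
    peel (glue r Ψ') k = Ψ' k := by
  funext h hist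
  show glue r Ψ' h.succ (Fin.cons k hist) = Ψ' k h hist
  rw [glue_succ]
  simp

lemma achievable_succ_iff (H' : ℕ) (v : Fin K → ℝ) :
    Achievable K (H' + 1) v ↔
      ∃ r ∈ simplexInt K, ∀ k : Fin K,
        Achievable K H' (fun j => v j - if k = j then 1 / r j else 0) := by
  constructor
  · rintro ⟨Ψ, hmem, hsum⟩
    refine ⟨Ψ 0 Fin.elim0, hmem 0 Fin.elim0, fun k => ?_⟩
    refine ⟨peel Ψ k, fun h hist => hmem _ _, fun q' => ?_⟩
    have h := hsum (Fin.cons k q')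
    rw [sum_decomp] at h
    have hq0 : (Fin.cons k q' : Fin (H'+2) → Fin K) 0 = k := by simp
    have htail : Fin.tail (Fin.cons k q' : Fin (H'+2) → Fin K) = q' := Fin.tail_cons _ _
    have hlast : (Fin.cons k q' : Fin (H'+2) → Fin K) (Fin.last (H'+1)) = q' (Fin.last H') := by
      rw [← Fin.succ_last, Fin.cons_succ]
    rw [hq0, htail, hlast] at h
    have hΨ0 : Ψ 0 (fun i => (Fin.cons k q' : Fin (H'+2) → Fin K) (Fin.castLE (0 : Fin (H'+2)).isLt.le i))
        = Ψ 0 Fin.elim0 := congrArg (Ψ 0) (funext fun i => i.elim0)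
    rw [hΨ0] at h
    have hgoal : (∑ h : Fin (H' + 1),
        if q' h = q' (Fin.last H')
        then 1 / peel Ψ k h (fun i => q' (Fin.castLE h.isLt.le i)) (q' (Fin.last H'))
        else 0)
        = v (q' (Fin.last H')) -
          (if k = q' (Fin.last H') then 1 / Ψ 0 Fin.elim0 (q' (Fin.last H')) else 0) := by
      linarith [h]
    rw [hgoal]
  · rintro ⟨r, hr, hA⟩
    choose Ψ' hm' hs' using hA
    refine ⟨glue r Ψ', ?_, ?_⟩
    · intro h
      refine Fin.cases ?_ ?_ h
      · intro hist
        rw [glue_zero]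
        exact hr
      · intro h' hist
        rw [glue_succ]
        exact hm' _ _ _
    · intro q
      rw [sum_decomp, peel_glue, glue_zero]
      have e1 : Fin.tail q (Fin.last H') = q (Fin.last (H'+1)) := by
        show q (Fin.last H').succ = q (Fin.last (H'+1))
        rw [Fin.succ_last]
      have h := hs' (q 0) (Fin.tail q)
      rw [h]
      beta_reduce
      rw [e1]
      ring

theorem achievable_iff_Ach : ∀ (H' : ℕ) (v : Fin K → ℝ), Achievable K H' v ↔ Ach K H' v := by
  intro H'
  induction H' with
  | zero => exact achievable_zero_iff
  | succ H' IH =>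
    intro v
    rw [achievable_succ_iff]
    constructor
    · rintro ⟨r, hr, hA⟩
      exact ⟨r, hr, fun k => (IH _).mp (hA k)⟩
    · rintro ⟨r, hr, hA⟩
      exact ⟨r, hr, fun k => (IH _).mpr (hA k)⟩

end BPF

/-- The Bellman–Pareto frontier (the set of `H`-achievable vectors, `H = H'+1 ≥ 1`)
equals the set of residual loss vectors of normalized states. -/
theorem bellman_pareto_frontier (K H' : ℕ) (hK : 1 ≤ K) :
    {v : Fin K → ℝ | Achievable K H' v} =
      {w : Fin K → ℝ | ∃ s : Fin K → ℝ, (⨅ k, s k) = 0 ∧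
        w = fun k => V K (H' + 1) s - s k} := by
  have hK0 : 0 < K := hK
  haveI : Nonempty (Fin K) := Fin.pos_iff_nonempty.mp hK0
  ext v
  simp only [Set.mem_setOf_eq]
  rw [BPF.achievable_iff_Ach, BPF.Ach_iff_V hK0 H' v]
  constructor
  · intro h
    set c : ℝ := ⨆ k, v k with hc
    set s : Fin K → ℝ := fun k => c - v k with hs
    obtain ⟨kmax, hkmax⟩ := Finite.exists_max v
    have hcmax : c = v kmax :=
      le_antisymm (ciSup_le hkmax) (le_ciSup (Finite.bddAbove_range v) kmax)
    have hse : s = fun k => -v k + c := by funext k; simp only [hs]; ring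
    have hVs : V K (H' + 1) s = c := by
      rw [hse, BPF.V_translate hK0 (H'+1) (fun k => -v k) c, h, zero_add]
    refine ⟨s, ?_, ?_⟩
    · apply le_antisymm
      · have := ciInf_le (Finite.bddBelow_range s) kmax
        have hsk : s kmax = 0 := by simp only [hs]; rw [hcmax]; ring
        rw [hsk] at this
        exact this
      · refine le_ciInf fun j => ?_
        have := hkmax j
        simp only [hs]
        linarith [hcmax]
    · funext k
      rw [hVs]
      simp only [hs]
      ring
  · rintro ⟨s, h0, rfl⟩
    have hse : (fun k => -(V K (H' + 1) s - s k)) = fun k => s k + (- V K (H' + 1) s) := by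
      funext k; ring
    rw [hse, BPF.V_translate hK0 (H'+1) s (- V K (H' + 1) s)]
    ring
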